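/- Let p be a real number with 0 ≤ p ≤ 1, let θ = arccos(√p), let X be the 2×2 complex matrix [[0,1],[1,0]], let U₁ = exp(−(i θ) • X) and U₂ = exp((i θ) • X). Then for every 2×2 complex matrix ρ, (1/2) · (U₁ ρ U₁† + U₂ ρ U₂†) = p • ρ + (1 − p) • (X ρ X). -/

import Mathlib

open Matrix
open scoped Matrix.Norms.L2Operator
set_option maxHeartbeats 800000

lemma exp_smul_of_mul_self_eq_one {A : Type*} [NormedRing A] [NormedAlgebra ℂ A]
    [CompleteSpace A] (a : A) (h : a * a = 1) (z : ℂ) :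
    NormedSpace.exp (z • a) = Complex.cosh z • (1 : A) + Complex.sinh z • a := by
  have ha : ∀ k : ℕ, a ^ (2 * k) = 1 := by
    intro k
    rw [pow_mul, sq, h, one_pow]
  have he : HasSum (fun k : ℕ => (((2 * k).factorial : ℂ)⁻¹) • (z • a) ^ (2 * k))
      (Complex.cosh z • (1 : A)) := by
    have := (Complex.hasSum_cosh z).smul_const (1 : A)
    convert this using 2 with k
    rw [smul_pow, ha, smul_smul]
    congr 1
    ring
  have ho : HasSum (fun k : ℕ => (((2 * k + 1).factorial : ℂ)⁻¹) • (z • a) ^ (2 * k + 1))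
      (Complex.sinh z • a) := by
    have := (Complex.hasSum_sinh z).smul_const a
    convert this using 2 with k
    rw [smul_pow, show a ^ (2 * k + 1) = a by rw [pow_succ, ha, one_mul], smul_smul]
    congr 1
    ring
  have hsum := HasSum.even_add_odd (f := fun n : ℕ => ((n.factorial : ℂ)⁻¹) • (z • a) ^ n) he ho
  rw [NormedSpace.exp_eq_tsum (𝕂 := ℂ)]
  beta_reduce
  exact hsum.tsum_eq

theorem stmt_11 (p : ℝ) (hp0 : 0 ≤ p) (hp1 : p ≤ 1)
    (θ : ℝ) (hθ : θ = Real.arccos (Real.sqrt p))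
    (X : Matrix (Fin 2) (Fin 2) ℂ) (hX : X = !![0, 1; 1, 0])
    (U₁ U₂ : Matrix (Fin 2) (Fin 2) ℂ)
    (hU₁ : U₁ = NormedSpace.exp ((-(Complex.I * (θ : ℂ))) • X))
    (hU₂ : U₂ = NormedSpace.exp ((Complex.I * (θ : ℂ)) • X)) :
    ∀ ρ : Matrix (Fin 2) (Fin 2) ℂ,
      (1 / 2 : ℂ) • (U₁ * ρ * U₁ᴴ + U₂ * ρ * U₂ᴴ) =
        (p : ℂ) • ρ + ((1 - p : ℝ) : ℂ) • (X * ρ * X) := by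
  intro ρ
  have hX2 : X * X = 1 := by
    subst hX
    ext i j
    fin_cases i <;> fin_cases j <;>
      simp [Matrix.mul_apply, Fin.sum_univ_two, Matrix.one_apply]
  have hXH : Xᴴ = X := by
    subst hX
    ext i j
    fin_cases i <;> fin_cases j <;> simp
  set c : ℂ := (Real.cos θ : ℂ) with hc
  set s : ℂ := (Real.sin θ : ℂ) with hs
  have hIθ : Complex.I * (θ : ℂ) = (θ : ℂ) * Complex.I := mul_comm _ _
  have hU₂' : U₂ = c • (1 : Matrix (Fin 2) (Fin 2) ℂ) + (s * Complex.I) • X := by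
    rw [hU₂, exp_smul_of_mul_self_eq_one X hX2, hIθ, Complex.cosh_mul_I,
      Complex.sinh_mul_I, ← Complex.ofReal_cos, ← Complex.ofReal_sin]
  have hU₁' : U₁ = c • (1 : Matrix (Fin 2) (Fin 2) ℂ) - (s * Complex.I) • X := by
    rw [hU₁, exp_smul_of_mul_self_eq_one X hX2, hIθ, Complex.cosh_neg, Complex.sinh_neg,
      Complex.cosh_mul_I, Complex.sinh_mul_I, ← Complex.ofReal_cos, ← Complex.ofReal_sin,
      neg_smul, ← sub_eq_add_neg]
  have hstar_c : star c = c := by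
    rw [hc, Complex.star_def, Complex.conj_ofReal]
  have hstar_sI : star (s * Complex.I) = -(s * Complex.I) := by
    rw [hs, star_mul', Complex.star_def, Complex.conj_ofReal, Complex.conj_I]
    ring
  have hU₁H : U₁ᴴ = c • (1 : Matrix (Fin 2) (Fin 2) ℂ) + (s * Complex.I) • X := by
    rw [hU₁', conjTranspose_sub, conjTranspose_smul, conjTranspose_smul, conjTranspose_one,
      hXH, hstar_c, hstar_sI, neg_smul, sub_neg_eq_add]
  have hU₂H : U₂ᴴ = c • (1 : Matrix (Fin 2) (Fin 2) ℂ) - (s * Complex.I) • X := by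
    rw [hU₂', conjTranspose_add, conjTranspose_smul, conjTranspose_smul, conjTranspose_one,
      hXH, hstar_c, hstar_sI, neg_smul, ← sub_eq_add_neg]
  -- scalar facts
  have hcos : Real.cos θ = Real.sqrt p := by
    rw [hθ, Real.cos_arccos (by nlinarith [Real.sqrt_nonneg p]) (by
      have := Real.sqrt_le_sqrt hp1
      simpa using this)]
  have hc2 : c * c = (p : ℂ) := by
    rw [hc, ← Complex.ofReal_mul, hcos, Real.mul_self_sqrt hp0]
  have hs2 : s * s = ((1 - p : ℝ) : ℂ) := by
    rw [hs, ← Complex.ofReal_mul]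
    congr 1
    have h1 : Real.sin θ * Real.sin θ = 1 - Real.cos θ * Real.cos θ := by
      nlinarith [Real.sin_sq_add_cos_sq θ]
    rw [h1, hcos, Real.mul_self_sqrt hp0]
  rw [hU₁H, hU₂H, hU₁', hU₂', ← hc2, ← hs2]
  simp only [Matrix.mul_add, Matrix.add_mul, Matrix.mul_sub, Matrix.sub_mul,
    Matrix.smul_mul, Matrix.mul_smul, Matrix.one_mul, Matrix.mul_one, smul_smul,
    mul_assoc, Matrix.mul_assoc]
  rw [show X * (ρ * X) = X * ρ * X from (Matrix.mul_assoc _ _ _).symm] at *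
  match_scalars <;> ring_nf <;> simp [Complex.I_sq]
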